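/- Let 0 < p < 1 and let T ∈ M_n(ℂ) be upper triangular with diagonal part Φ(T). Then τ(|Φ(T)|^p) ≤ τ(|T|^p), where |x| = (x*x)^{1/2} and τ is the normalized trace. -/

import Mathlib

open Finset Matrix
open scoped ComplexOrder

variable {k n : ℕ}

/-- Abel summation bound: if `s` is antitone nonneg and all prefix sums of `z`
are nonpositive, then `∑ s i * z i ≤ c * ∑ z i` for any `0 ≤ c ≤ s`. -/
lemma abel_aux (s z : ℕ → ℝ) :
    ∀ (m : ℕ), (∀ i < m, 0 ≤ s i) → (∀ i j, i ≤ j → j < m → s j ≤ s i) →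
    (∀ k ≤ m, ∑ i ∈ range k, z i ≤ 0) →
    ∀ c, 0 ≤ c → (∀ i < m, c ≤ s i) →
    ∑ i ∈ range m, s i * z i ≤ c * ∑ i ∈ range m, z i := by
  intro m
  induction m with
  | zero => intro _ _ _ c _ _; simp
  | succ m ih =>
    intro hs0 hsa hz c hc hcs
    have hsm0 : 0 ≤ s m := hs0 m (Nat.lt_succ_self m)
    have h1 : ∑ i ∈ range m, s i * z i ≤ s m * ∑ i ∈ range m, z i := by
      refine ih (fun i hi => hs0 i (hi.trans (Nat.lt_succ_self m)))
        (fun i j hij hj => hsa i j hij (hj.trans (Nat.lt_succ_self m)))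
        (fun k hk => hz k (hk.trans (Nat.le_succ m))) (s m) hsm0
        (fun i hi => hsa i m (Nat.le_of_lt hi) (Nat.lt_succ_self m))
    rw [sum_range_succ, sum_range_succ]
    have h2 : s m * ∑ i ∈ range m, z i + s m * z m = s m * (∑ i ∈ range m, z i + z m) := by ring
    calc ∑ i ∈ range m, s i * z i + s m * z m
        ≤ s m * ∑ i ∈ range m, z i + s m * z m := by linarith
      _ = s m * (∑ i ∈ range m, z i + z m) := h2
      _ ≤ c * (∑ i ∈ range m, z i + z m) := by
          have hZ : (∑ i ∈ range m, z i + z m) ≤ 0 := by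
            have := hz (m + 1) le_rfl
            rwa [sum_range_succ] at this
          have hcsm : c ≤ s m := hcs m (Nat.lt_succ_self m)
          nlinarith

/-- Weyl's lemma, exponential form. -/
lemma sum_exp_le (x y : ℕ → ℝ) (m : ℕ) (q : ℝ) (hq : 0 < q)
    (hx : ∀ i j, i ≤ j → j < m → x j ≤ x i)
    (hpre : ∀ k ≤ m, ∑ i ∈ range k, x i ≤ ∑ i ∈ range k, y i) :
    ∑ i ∈ range m, Real.exp (q * x i) ≤ ∑ i ∈ range m, Real.exp (q * y i) := by
  have key : ∑ i ∈ range m, (Real.exp (q * x i) - Real.exp (q * y i)) ≤ 0 := by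
    have hpt : ∀ i, Real.exp (q * x i) - Real.exp (q * y i) ≤
        (q * Real.exp (q * x i)) * (x i - y i) := by
      intro i
      have h := Real.add_one_le_exp (q * (y i - x i))
      have hexp : Real.exp (q * y i) = Real.exp (q * x i) * Real.exp (q * (y i - x i)) := by
        rw [← Real.exp_add]; ring_nf
      have hpos := Real.exp_pos (q * x i)
      nlinarith [Real.exp_pos (q * (y i - x i))]
    have h2 : ∑ i ∈ range m, (Real.exp (q * x i) - Real.exp (q * y i)) ≤
        ∑ i ∈ range m, (q * Real.exp (q * x i)) * (x i - y i) :=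
      Finset.sum_le_sum fun i _ => hpt i
    have h3 : ∑ i ∈ range m, (q * Real.exp (q * x i)) * (x i - y i) ≤ 0 := by
      have := abel_aux (fun i => q * Real.exp (q * x i)) (fun i => x i - y i) m
        (fun i _ => by positivity)
        (fun i j hij hj => by
          have h1 := hx i j hij hj
          have h2 := Real.exp_le_exp.2 (mul_le_mul_of_nonneg_left h1 hq.le)
          show q * Real.exp (q * x j) ≤ q * Real.exp (q * x i)
          nlinarith)
        (fun k hk => by
          have := hpre k hk
          simp only [Finset.sum_sub_distrib]
          linarith)
        0 le_rfl (fun i _ => by positivity)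
      simpa using this
    linarith
  rw [Finset.sum_sub_distrib] at key
  linarith

/-- Weyl's scalar majorization lemma (positive case). -/
lemma weyl_pos (a b : ℕ → ℝ) (m : ℕ) (q : ℝ) (hq : 0 < q)
    (ha : ∀ i < m, 0 < a i) (hb : ∀ i < m, 0 < b i)
    (haa : ∀ i j, i ≤ j → j < m → a j ≤ a i)
    (hab : ∀ k ≤ m, ∏ i ∈ range k, a i ≤ ∏ i ∈ range k, b i) :
    ∑ i ∈ range m, a i ^ q ≤ ∑ i ∈ range m, b i ^ q := by
  set x : ℕ → ℝ := fun i => Real.log (a i) with hxdef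
  set y : ℕ → ℝ := fun i => Real.log (b i) with hydef
  have hxa : ∀ i < m, a i ^ q = Real.exp (q * x i) := fun i hi => by
    rw [Real.rpow_def_of_pos (ha i hi)]; ring_nf; exact congrArg Real.exp (mul_comm _ _)
  have hyb : ∀ i < m, b i ^ q = Real.exp (q * y i) := fun i hi => by
    rw [Real.rpow_def_of_pos (hb i hi)]; ring_nf; exact congrArg Real.exp (mul_comm _ _)
  rw [Finset.sum_congr rfl (fun i hi => hxa i (mem_range.1 hi)),
      Finset.sum_congr rfl (fun i hi => hyb i (mem_range.1 hi))]
  refine sum_exp_le x y m q hq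
    (fun i j hij hj => Real.log_le_log (ha j hj) (haa i j hij hj))
    (fun k hk => ?_)
  have h1 : Real.log (∏ i ∈ range k, a i) ≤ Real.log (∏ i ∈ range k, b i) :=
    Real.log_le_log (Finset.prod_pos fun i hi => ha i ((mem_range.1 hi).trans_le hk))
      (hab k hk)
  rwa [Real.log_prod (fun i hi => (ha i ((mem_range.1 hi).trans_le hk)).ne'),
       Real.log_prod (fun i hi => (hb i ((mem_range.1 hi).trans_le hk)).ne')] at h1

/-- Weyl's scalar majorization lemma. -/
lemma weyl_scalar (a b : ℕ → ℝ) (m : ℕ) (q : ℝ) (hq : 0 < q)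
    (ha : ∀ i < m, 0 ≤ a i) (hb : ∀ i < m, 0 ≤ b i)
    (haa : ∀ i j, i ≤ j → j < m → a j ≤ a i)
    (hab : ∀ k ≤ m, ∏ i ∈ range k, a i ≤ ∏ i ∈ range k, b i) :
    ∑ i ∈ range m, a i ^ q ≤ ∑ i ∈ range m, b i ^ q := by
  by_cases hp : ∀ i < m, 0 < a i
  · -- all positive; get b positive too
    have hbp : ∀ i < m, 0 < b i := by
      intro i hi
      rcases lt_or_ge 0 (b i) with h | h
      · exact h
      · exfalso
        have hbe : b i = 0 := le_antisymm h (hb i hi)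
        have h1 : ∏ j ∈ range (i+1), a j ≤ ∏ j ∈ range (i+1), b j := hab (i+1) hi
        have h2 : ∏ j ∈ range (i+1), b j = 0 := by
          apply Finset.prod_eq_zero (mem_range.2 (Nat.lt_succ_self i)) hbe
        have h3 : 0 < ∏ j ∈ range (i+1), a j :=
          Finset.prod_pos fun j hj => hp j ((mem_range.1 hj).trans_le hi)
        rw [h2] at h1; linarith
    exact weyl_pos a b m q hq hp hbp haa hab
  · push_neg at hp
    obtain ⟨i₀, hi₀m, hi₀⟩ := hp
    have hex : ∃ i, i < m ∧ a i ≤ 0 := ⟨i₀, hi₀m, hi₀⟩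
    set m' := Nat.find hex with hm'
    obtain ⟨hm'm, hm'a⟩ := Nat.find_spec hex
    have hpos : ∀ i < m', 0 < a i := by
      intro i hi
      have := Nat.find_min hex hi
      push_neg at this
      rcases lt_or_ge 0 (a i) with h | h
      · exact h
      · exact absurd (this (hi.trans hm'm)) (not_lt.2 h)
    have hzero : ∀ i, m' ≤ i → i < m → a i = 0 := by
      intro i h1 h2
      have : a i ≤ a m' := haa m' i h1 h2
      have ham' : a m' = 0 := le_antisymm hm'a (ha m' hm'm)
      exact le_antisymm (ham' ▸ this) (ha i h2)
    have hsplit : ∑ i ∈ range m, a i ^ q = ∑ i ∈ range m', a i ^ q := by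
      rw [← Finset.sum_range_add_sum_Ico _ (le_of_lt hm'm)]
      have : ∑ i ∈ Finset.Ico m' m, a i ^ q = 0 := by
        apply Finset.sum_eq_zero
        intro i hi
        obtain ⟨h1, h2⟩ := Finset.mem_Ico.1 hi
        rw [hzero i h1 h2, Real.zero_rpow hq.ne']
      rw [this, add_zero]
    have hbp : ∀ i < m', 0 < b i := by
      intro i hi
      rcases lt_or_ge 0 (b i) with h | h
      · exact h
      · exfalso
        have him : i < m := hi.trans hm'm
        have hbe : b i = 0 := le_antisymm h (hb i him)
        have h1 : ∏ j ∈ range (i+1), a j ≤ ∏ j ∈ range (i+1), b j := hab (i+1) him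
        have h2 : ∏ j ∈ range (i+1), b j = 0 :=
          Finset.prod_eq_zero (mem_range.2 (Nat.lt_succ_self i)) hbe
        have h3 : 0 < ∏ j ∈ range (i+1), a j :=
          Finset.prod_pos fun j hj => hpos j ((mem_range.1 hj).trans_le hi)
        rw [h2] at h1; linarith
    have hmain : ∑ i ∈ range m', a i ^ q ≤ ∑ i ∈ range m', b i ^ q := by
      refine weyl_pos a b m' q hq hpos hbp
        (fun i j hij hj => haa i j hij (hj.trans hm'm))
        (fun k hk => hab k (hk.trans hm'm.le))
    have hext : ∑ i ∈ range m', b i ^ q ≤ ∑ i ∈ range m, b i ^ q := by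
      apply Finset.sum_le_sum_of_subset_of_nonneg
      · exact Finset.range_subset_range.2 hm'm.le
      · intro i hi _
        exact Real.rpow_nonneg (hb i (mem_range.1 hi)) q
    linarith [hsplit ▸ hmain]

lemma det_conj_diag_expansion (M : Matrix (Fin n) (Fin k) ℂ) :
    ∃ Θ : Finset (Fin n) → ℂ,
      ∀ μ : Fin n → ℂ,
        (Mᴴ * Matrix.diagonal μ * M).det =
          ∑ S ∈ Finset.powersetCard k Finset.univ, (∏ j ∈ S, μ j) * Θ S := by
  classical
  set v : Fin n → (Fin k → ℂ) := fun j => M j with hv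
  set Δ : (Fin k → Fin n) → ℂ :=
    fun g => Matrix.detRowAlternating (fun a => v (g a)) with hΔ
  set ψ : (Fin k → Fin n) → ℂ :=
    fun g => (∏ a, (starRingEnd ℂ) (M (g a) a)) * Δ g with hψ
  set inj : Finset (Fin k → Fin n) :=
    Finset.univ.filter (fun g => Function.Injective g) with hinj
  refine ⟨fun S => ∑ g ∈ inj.filter (fun g => Finset.univ.image g = S), ψ g, fun μ => ?_⟩
  set c : Fin k → Fin n → ℂ := fun a j => (starRingEnd ℂ) (M j a) * μ j with hc
  have expand := MultilinearMap.map_sum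
    (Matrix.detRowAlternating (R := ℂ) (n := Fin k)).toMultilinearMap
    (g := fun (a : Fin k) (j : Fin n) => c a j • v j)
  have hmat : (Mᴴ * Matrix.diagonal μ * M).det
      = Matrix.detRowAlternating (fun a => ∑ j, c a j • v j) := by
    have : Mᴴ * Matrix.diagonal μ * M = Matrix.of (fun a => ∑ j, c a j • v j) := by
      ext a b
      simp [Matrix.mul_apply, Matrix.diagonal, Finset.sum_ite_eq, mul_assoc, hv, hc,
        Matrix.conjTranspose_apply, Finset.sum_apply]
    rw [this]
    rfl
  have hdet : (Mᴴ * Matrix.diagonal μ * M).det =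
      ∑ g : Fin k → Fin n, (∏ a, c a (g a)) * Δ g := by
    rw [hmat]
    rw [show Matrix.detRowAlternating (fun a => ∑ j, c a j • v j)
      = (Matrix.detRowAlternating (R := ℂ) (n := Fin k)).toMultilinearMap
          (fun a => ∑ j, (fun (a : Fin k) (j : Fin n) => c a j • v j) a j) from rfl]
    rw [expand]
    refine Finset.sum_congr rfl fun g _ => ?_
    rw [show ((Matrix.detRowAlternating (R := ℂ) (n := Fin k)).toMultilinearMap
        fun a => (fun (a : Fin k) (j : Fin n) => c a j • v j) a (g a))
      = (Matrix.detRowAlternating (R := ℂ) (n := Fin k)).toMultilinearMap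
          (fun a => c a (g a) • v (g a)) from rfl]
    rw [MultilinearMap.map_smul_univ]
    simp [smul_eq_mul, hΔ]
  -- non-injective terms vanish
  have hvanish : ∀ g : Fin k → Fin n, ¬ Function.Injective g → Δ g = 0 := by
    intro g hg
    rw [Function.not_injective_iff] at hg
    obtain ⟨a, b, hab, hne⟩ := hg
    exact AlternatingMap.map_eq_zero_of_eq _ _ (by rw [hab]) hne
  have hdet2 : (Mᴴ * Matrix.diagonal μ * M).det =
      ∑ g ∈ inj, (∏ a, c a (g a)) * Δ g := by
    rw [hdet, hinj]
    refine (Finset.sum_filter_of_ne ?_).symm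
    intro g _ hne
    by_contra hni
    exact hne (by rw [hvanish g hni, mul_zero])
  -- rewrite each injective term
  have hterm : ∀ g ∈ inj, (∏ a, c a (g a)) * Δ g
      = (∏ j ∈ Finset.univ.image g, μ j) * ψ g := by
    intro g hg
    have hginj : Function.Injective g := (Finset.mem_filter.1 hg).2
    have h1 : (∏ a, c a (g a)) = (∏ a, μ (g a)) * (∏ a, (starRingEnd ℂ) (M (g a) a)) := by
      rw [← Finset.prod_mul_distrib]
      exact Finset.prod_congr rfl fun a _ => mul_comm _ _
    have h2 : (∏ a, μ (g a)) = ∏ j ∈ Finset.univ.image g, μ j :=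
      (Finset.prod_image (fun x _ y _ h => hginj h)).symm
    rw [h1, h2, hψ]
    ring
  rw [hdet2, Finset.sum_congr rfl hterm]
  -- group by image
  have hmaps : ∀ g ∈ inj, Finset.univ.image g ∈ Finset.powersetCard k Finset.univ := by
    intro g hg
    have hginj : Function.Injective g := (Finset.mem_filter.1 hg).2
    rw [Finset.mem_powersetCard_univ, Finset.card_image_of_injective _ hginj,
      Finset.card_univ, Fintype.card_fin]
  rw [← Finset.sum_fiberwise_of_maps_to hmaps]
  refine Finset.sum_congr rfl fun S _ => ?_
  rw [Finset.mul_sum]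
  refine Finset.sum_congr rfl fun g hg => ?_
  have : Finset.univ.image g = S := (Finset.mem_filter.1 hg).2
  rw [this]

/-- indicator of `S` as a complex diagonal weight -/
noncomputable def ind (S : Finset (Fin n)) : Fin n → ℂ := fun j => if j ∈ S then 1 else 0

lemma ind_prod (S₀ S : Finset (Fin n)) (h : S.card = S₀.card) :
    (∏ j ∈ S, ind S₀ j) = if S = S₀ then 1 else 0 := by
  classical
  by_cases hsub : S ⊆ S₀
  · have hSS : S = S₀ := Finset.eq_of_subset_of_card_le hsub (le_of_eq h.symm)
    rw [if_pos hSS, hSS]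
    exact (Finset.prod_congr rfl fun x hx => by simp [ind, hx]).trans Finset.prod_const_one
  · obtain ⟨j, hjS, hjS₀⟩ := Finset.not_subset.1 hsub
    have : S ≠ S₀ := fun he => hjS₀ (he ▸ hjS)
    rw [if_neg this]
    exact Finset.prod_eq_zero hjS (by simp [ind, hjS₀])

/-- The coefficients in the expansion are the indicator determinants. -/
lemma theta_eq (M : Matrix (Fin n) (Fin k) ℂ) (Θ : Finset (Fin n) → ℂ)
    (hΘ : ∀ μ : Fin n → ℂ,
        (Mᴴ * Matrix.diagonal μ * M).det =
          ∑ S ∈ Finset.powersetCard k Finset.univ, (∏ j ∈ S, μ j) * Θ S)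
    (S₀ : Finset (Fin n)) (hS₀ : S₀.card = k) :
    Θ S₀ = (Mᴴ * Matrix.diagonal (ind S₀) * M).det := by
  classical
  rw [hΘ (ind S₀)]
  rw [Finset.sum_eq_single_of_mem S₀ (Finset.mem_powersetCard_univ.2 hS₀)]
  · rw [ind_prod S₀ S₀ rfl, if_pos rfl, one_mul]
  · intro S hS hne
    rw [ind_prod S₀ S (by rw [Finset.mem_powersetCard_univ.1 hS, hS₀]), if_neg hne, zero_mul]

/-- `Mᴴ * diagonal (ind S) * M` is positive semidefinite, so its determinant is
a nonnegative real. -/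
lemma det_ind_real (M : Matrix (Fin n) (Fin k) ℂ) (S : Finset (Fin n)) :
    ∃ r : ℝ, 0 ≤ r ∧ (Mᴴ * Matrix.diagonal (ind S) * M).det = (r : ℂ) := by
  classical
  have hfact : Mᴴ * Matrix.diagonal (ind S) * M
      = (Matrix.diagonal (ind S) * M)ᴴ * (Matrix.diagonal (ind S) * M) := by
    rw [Matrix.conjTranspose_mul, Matrix.diagonal_conjTranspose]
    have h1 : star (ind S) = ind S := by
      funext j; by_cases h : j ∈ S <;> simp [ind, h]
    rw [h1]
    have h2 : (fun j => ind S j * ind S j) = ind S := by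
      funext j; by_cases h : j ∈ S <;> simp [ind, h]
    simp only [Matrix.mul_assoc]
    rw [← Matrix.mul_assoc (Matrix.diagonal (ind S)) (Matrix.diagonal (ind S)) M,
      Matrix.diagonal_mul_diagonal, h2]
  have hpsd : (Mᴴ * Matrix.diagonal (ind S) * M).PosSemidef := by
    rw [hfact]; exact Matrix.posSemidef_conjTranspose_mul_self _
  refine ⟨∏ i, hpsd.1.eigenvalues i, Finset.prod_nonneg fun i _ => hpsd.eigenvalues_nonneg i, ?_⟩
  rw [hpsd.1.det_eq_prod_eigenvalues]
  push_cast
  rfl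

/-- packaged version: real coefficients -/
lemma det_conj_diag_expansion' (M : Matrix (Fin n) (Fin k) ℂ) :
    ∃ rr : Finset (Fin n) → ℝ, (∀ S ∈ Finset.powersetCard k (Finset.univ : Finset (Fin n)), 0 ≤ rr S ∧
        ((Mᴴ * Matrix.diagonal (ind S) * M).det = (rr S : ℂ))) ∧
      ∀ μ : Fin n → ℝ,
        (Mᴴ * Matrix.diagonal (fun j => (μ j : ℂ)) * M).det =
          ((∑ S ∈ Finset.powersetCard k Finset.univ, (∏ j ∈ S, μ j) * rr S : ℝ) : ℂ) := by
  classical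
  obtain ⟨Θ, hΘ⟩ := det_conj_diag_expansion M
  refine ⟨fun S => (Θ S).re, fun S hS => ?_, fun μ => ?_⟩
  · obtain ⟨r, hr0, hr⟩ := det_ind_real M S
    have h1 : Θ S = (r : ℂ) := by
      rw [theta_eq M Θ hΘ S (Finset.mem_powersetCard_univ.1 hS), hr]
    constructor
    · show 0 ≤ (Θ S).re
      rw [h1]; simpa using hr0
    · show (Mᴴ * Matrix.diagonal (ind S) * M).det = ((Θ S).re : ℂ)
      rw [hr, h1]; simp
  · rw [hΘ]
    push_cast
    refine Finset.sum_congr rfl fun S hS => ?_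
    obtain ⟨r, hr0, hr⟩ := det_ind_real M S
    have h1 : Θ S = (r : ℂ) := by
      rw [theta_eq M Θ hΘ S (Finset.mem_powersetCard_univ.1 hS), hr]
    rw [h1]
    simp

/-- the main estimate when `M` has orthonormal columns -/
lemma det_conj_diag_le (M : Matrix (Fin n) (Fin k) ℂ) (hM : Mᴴ * M = 1)
    (μ : Fin n → ℝ) (hμ : ∀ j, 0 ≤ μ j) (c : ℝ)
    (hbound : ∀ S : Finset (Fin n), S.card = k → ∏ j ∈ S, μ j ≤ c)
    (R : ℝ) (hR : (Mᴴ * Matrix.diagonal (fun j => (μ j : ℂ)) * M).det = (R : ℂ)) :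
    R ≤ c := by
  classical
  obtain ⟨rr, hrr, hid⟩ := det_conj_diag_expansion' M
  have hRe : R = ∑ S ∈ Finset.powersetCard k Finset.univ, (∏ j ∈ S, μ j) * rr S := by
    have h := (hid μ).symm.trans hR
    exact (Complex.ofReal_inj.1 h).symm
  have hsum1 : (∑ S ∈ Finset.powersetCard k Finset.univ, rr S) = 1 := by
    have h1 := hid (fun _ => 1)
    have h2 : (Mᴴ * Matrix.diagonal (fun _ : Fin n => ((1:ℝ) : ℂ)) * M).det = 1 := by
      have : Matrix.diagonal (fun _ : Fin n => ((1:ℝ) : ℂ)) = 1 := by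
        rw [show (fun _ : Fin n => ((1:ℝ):ℂ)) = fun _ => (1:ℂ) by norm_num]
        exact Matrix.diagonal_one
      rw [this, Matrix.mul_one, hM, Matrix.det_one]
    rw [h2] at h1
    have h3 : ((1:ℝ) : ℂ) = _ := h1
    have h4 := Complex.ofReal_inj.1 h3
    simpa using h4.symm
  rw [hRe]
  calc ∑ S ∈ Finset.powersetCard k Finset.univ, (∏ j ∈ S, μ j) * rr S
      ≤ ∑ S ∈ Finset.powersetCard k Finset.univ, c * rr S := by
        refine Finset.sum_le_sum fun S hS => ?_
        exact mul_le_mul_of_nonneg_right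
          (hbound S (Finset.mem_powersetCard_univ.1 hS)) (hrr S hS).1
    _ = c * ∑ S ∈ Finset.powersetCard k Finset.univ, rr S := by rw [← Finset.mul_sum]
    _ = c := by rw [hsum1, mul_one]

/-- compression along an index subset -/
lemma conj_diag_ind_eq_submatrix (Y : Matrix (Fin n) (Fin k) ℂ) (S : Finset (Fin n))
    (hS : S.card = k) :
    Yᴴ * Matrix.diagonal (ind S) * Y =
      (Y.submatrix (fun a => S.orderEmbOfFin hS a) id)ᴴ *
        (Y.submatrix (fun a => S.orderEmbOfFin hS a) id) := by
  classical
  have himg : Finset.image (fun a => S.orderEmbOfFin hS a) Finset.univ = S := by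
    ext x
    simp only [Finset.mem_image, Finset.mem_univ, true_and]
    constructor
    · rintro ⟨a, rfl⟩; exact S.orderEmbOfFin_mem hS a
    · intro hx
      have : x ∈ Set.range (S.orderEmbOfFin hS) := by
        rw [S.range_orderEmbOfFin hS]; exact hx
      obtain ⟨a, ha⟩ := this
      exact ⟨a, ha⟩
  ext a b
  rw [Matrix.mul_apply, Matrix.mul_apply]
  have hL : ∀ j, (Yᴴ * Matrix.diagonal (ind S)) a j = star (Y j a) * ind S j := by
    intro j
    rw [Matrix.mul_diagonal, Matrix.conjTranspose_apply]
  simp only [hL]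
  have hstep : (∑ j, star (Y j a) * ind S j * Y j b)
      = ∑ j ∈ S, star (Y j a) * Y j b := ?_
  rw [hstep]
  · have himage := Finset.sum_image (s := (Finset.univ : Finset (Fin k)))
      (g := fun a => S.orderEmbOfFin hS a)
      (f := fun j => star (Y j a) * Y j b)
      (fun x _ y _ h => (S.orderEmbOfFin hS).injective h)
    rw [himg] at himage
    rw [himage]
    refine Finset.sum_congr rfl fun c _ => ?_
    simp [Matrix.conjTranspose_apply, Matrix.submatrix_apply]
  · rw [← Finset.sum_filter_of_ne (p := fun j => j ∈ S)]
    · rw [Finset.filter_mem_eq_inter, Finset.univ_inter]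
      refine Finset.sum_congr rfl fun j hj => by simp [ind, hj]
    · intro j _ hne
      by_contra hni
      exact hne (by simp [ind, hni])

/-- lower bound: any maximal square subdeterminant is dominated -/
lemma sq_abs_det_submatrix_le (Y : Matrix (Fin n) (Fin k) ℂ) (S : Finset (Fin n))
    (hS : S.card = k) (R : ℝ) (hR : (Yᴴ * Y).det = (R : ℂ)) :
    (‖(Y.submatrix (fun a => S.orderEmbOfFin hS a) id).det‖)^2 ≤ R := by
  classical
  obtain ⟨rr, hrr, hid⟩ := det_conj_diag_expansion' Y
  have h1 : (Yᴴ * Y).det = ((∑ S' ∈ Finset.powersetCard k Finset.univ, rr S' : ℝ) : ℂ) := by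
    have := hid (fun _ => 1)
    have hd : Matrix.diagonal (fun _ : Fin n => ((1:ℝ) : ℂ)) = 1 := by
      rw [show (fun _ : Fin n => ((1:ℝ):ℂ)) = fun _ => (1:ℂ) by norm_num]
      exact Matrix.diagonal_one
    rw [hd, Matrix.mul_one] at this
    simpa using this
  have hRsum : R = ∑ S' ∈ Finset.powersetCard k Finset.univ, rr S' :=
    Complex.ofReal_inj.1 (hR.symm.trans h1)
  have hSmem : S ∈ Finset.powersetCard k (Finset.univ : Finset (Fin n)) :=
    Finset.mem_powersetCard_univ.2 hS
  -- rr S equals the squared abs of the subdeterminant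
  have h2 : (rr S : ℂ) = ((‖(Y.submatrix (fun a => S.orderEmbOfFin hS a) id).det‖)^2 : ℝ) := by
    rw [← (hrr S hSmem).2, conj_diag_ind_eq_submatrix Y S hS]
    rw [Matrix.det_mul, Matrix.det_conjTranspose, Complex.star_def,
      ← Complex.normSq_eq_conj_mul_self, Complex.sq_norm]
  have h3 : rr S = (‖(Y.submatrix (fun a => S.orderEmbOfFin hS a) id).det‖)^2 :=
    Complex.ofReal_inj.1 h2
  rw [hRsum, ← h3]
  exact Finset.single_le_sum (fun S' hS' => (hrr S' hS').1) hSmem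

lemma psd_det_real {m : ℕ} (A : Matrix (Fin m) (Fin m) ℂ) (h : A.PosSemidef) :
    ∃ r : ℝ, 0 ≤ r ∧ A.det = (r : ℂ) := by
  refine ⟨∏ i, h.1.eigenvalues i, Finset.prod_nonneg fun i _ => h.eigenvalues_nonneg i, ?_⟩
  rw [h.1.det_eq_prod_eigenvalues]
  push_cast
  rfl

lemma prod_S_eq (S : Finset (Fin n)) (hS : S.card = k) (g : Fin n → ℝ) :
    ∏ i ∈ S, g i = ∏ a : Fin k, g (S.orderEmbOfFin hS a) := by
  classical
  have himg : Finset.image (fun a => S.orderEmbOfFin hS a) Finset.univ = S := by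
    ext x
    simp only [Finset.mem_image, Finset.mem_univ, true_and]
    constructor
    · rintro ⟨a, rfl⟩; exact S.orderEmbOfFin_mem hS a
    · intro hx
      have : x ∈ Set.range (S.orderEmbOfFin hS) := by
        rw [S.range_orderEmbOfFin hS]; exact hx
      obtain ⟨a, ha⟩ := this
      exact ⟨a, ha⟩
  have := Finset.prod_image (s := (Finset.univ : Finset (Fin k)))
    (g := fun a => S.orderEmbOfFin hS a) (f := g)
    (fun x _ y _ h => (S.orderEmbOfFin hS).injective h)
  rw [himg] at this
  rw [this]

/-- Key matrix estimate: for upper triangular `T`, the product of `|T i i|²` over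
any subset `S` is bounded by any common bound for the `#S`-fold products of
eigenvalues of `Tᴴ * T`. -/
lemma key_matrix (T : Matrix (Fin n) (Fin n) ℂ)
    (hT : T.BlockTriangular (id : Fin n → Fin n)) (S : Finset (Fin n)) (c : ℝ)
    (hc : ∀ S' : Finset (Fin n), S'.card = S.card →
      ∏ j ∈ S', (posSemidef_conjTranspose_mul_self T).1.eigenvalues j ≤ c) :
    ∏ i ∈ S, (‖T i i‖)^2 ≤ c := by
  classical
  set hA := (posSemidef_conjTranspose_mul_self T).1 with hhA
  set lam := hA.eigenvalues with hlam
  set e : Fin S.card → Fin n := fun a => S.orderEmbOfFin rfl a with he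
  set P : Matrix (Fin n) (Fin S.card) ℂ :=
    Matrix.of (fun i a => if i = e a then 1 else 0) with hP
  set V : Matrix (Fin n) (Fin n) ℂ := (hA.eigenvectorUnitary : Matrix (Fin n) (Fin n) ℂ)
    with hV
  set M : Matrix (Fin n) (Fin S.card) ℂ := Vᴴ * P with hM
  set Y : Matrix (Fin n) (Fin S.card) ℂ := T * P with hY
  have hPP : Pᴴ * P = 1 := by
    ext a b
    rw [Matrix.mul_apply, Matrix.one_apply]
    simp only [hP, Matrix.conjTranspose_apply, Matrix.of_apply]
    rw [Finset.sum_congr rfl (fun i _ => show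
      star (if i = e a then (1:ℂ) else 0) * (if i = e b then 1 else 0)
        = if i = e a then (if i = e b then 1 else 0) else 0 by
      by_cases h : i = e a <;> simp [h])]
    rw [Finset.sum_ite_eq' (Finset.univ : Finset (Fin n)) (e a)]
    simp only [Finset.mem_univ, if_true]
    by_cases hab : a = b
    · simp [hab]
    · have : e a ≠ e b := fun hh => hab ((S.orderEmbOfFin rfl).injective hh)
      simp [hab, this]
  have hVV : V * Vᴴ = 1 := by
    have := (Matrix.mem_unitaryGroup_iff).mp (hA.eigenvectorUnitary).2
    rwa [← Matrix.star_eq_conjTranspose]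
  have hMM : Mᴴ * M = 1 := by
    rw [hM, Matrix.conjTranspose_mul, Matrix.conjTranspose_conjTranspose]
    calc Pᴴ * V * (Vᴴ * P) = Pᴴ * (V * Vᴴ) * P := by
          simp only [Matrix.mul_assoc]
      _ = Pᴴ * P := by rw [hVV, Matrix.mul_one]
      _ = 1 := hPP
  have hspec : Tᴴ * T = V * Matrix.diagonal (fun j => ((lam j : ℝ) : ℂ)) * Vᴴ := by
    have h := hA.spectral_theorem
    rw [Unitary.conjStarAlgAut_apply] at h
    exact h
  have hYY : Yᴴ * Y = Mᴴ * Matrix.diagonal (fun j => ((lam j : ℝ) : ℂ)) * M := by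
    rw [hY, hM, Matrix.conjTranspose_mul, Matrix.conjTranspose_mul,
      Matrix.conjTranspose_conjTranspose]
    calc Pᴴ * Tᴴ * (T * P) = Pᴴ * (Tᴴ * T) * P := by simp only [Matrix.mul_assoc]
      _ = Pᴴ * (V * Matrix.diagonal (fun j => ((lam j : ℝ) : ℂ)) * Vᴴ) * P := by rw [hspec]
      _ = Pᴴ * V * Matrix.diagonal (fun j => ((lam j : ℝ) : ℂ)) * (Vᴴ * P) := by
          simp only [Matrix.mul_assoc]
  obtain ⟨R, hR0, hRdet⟩ := psd_det_real (Yᴴ * Y) (Matrix.posSemidef_conjTranspose_mul_self Y)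
  have hR2 : (Mᴴ * Matrix.diagonal (fun j => ((lam j : ℝ) : ℂ)) * M).det = (R : ℂ) := by
    rw [← hYY]; exact hRdet
  have step1 : R ≤ c :=
    det_conj_diag_le M hMM lam (fun j => (posSemidef_conjTranspose_mul_self T).eigenvalues_nonneg j) c
      (fun S' hS' => hc S' hS') R hR2
  have hsub : Y.submatrix e id = T.submatrix e e := by
    ext a b
    simp only [hY, Matrix.submatrix_apply, Matrix.mul_apply, hP, Matrix.of_apply, id_eq,
      mul_ite, mul_one, mul_zero]
    rw [Finset.sum_ite_eq' (Finset.univ : Finset (Fin n)) (e b)]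
    simp
  have step2 : (‖(Y.submatrix (fun a => S.orderEmbOfFin rfl a) id).det‖)^2 ≤ R :=
    sq_abs_det_submatrix_le Y S rfl R hRdet
  have htri : (T.submatrix e e).BlockTriangular (id : Fin S.card → Fin S.card) := by
    intro a b hba
    exact hT ((S.orderEmbOfFin rfl).strictMono hba)
  have hdet : (T.submatrix e e).det = ∏ a, T (e a) (e a) :=
    Matrix.det_of_upperTriangular htri
  have heq : ∏ i ∈ S, (‖T i i‖)^2
      = (‖(T.submatrix e e).det‖)^2 := by
    rw [prod_S_eq S rfl (fun i => (‖T i i‖)^2), hdet]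
    rw [norm_prod]
    rw [← Finset.prod_pow]
  have : (‖(Y.submatrix (fun a => S.orderEmbOfFin rfl a) id).det‖)^2
      = (‖(T.submatrix e e).det‖)^2 := by
    rw [show (fun a => S.orderEmbOfFin rfl a) = e from rfl, hsub]
  rw [heq, ← this]
  exact le_trans step2 step1

lemma strictMono_le_val {f : Fin k → Fin n} (hf : StrictMono f) (i : Fin k) :
    (i : ℕ) ≤ (f i : ℕ) := by
  have key : ∀ m : ℕ, ∀ h : m < k, m ≤ (f ⟨m, h⟩ : ℕ) := by
    intro m
    induction m with
    | zero => intro h; exact Nat.zero_le _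
    | succ m ih =>
      intro h
      have h' : m < k := Nat.lt_of_succ_lt h
      have hlt : f ⟨m, h'⟩ < f ⟨m + 1, h⟩ := hf (Fin.mk_lt_mk.2 (Nat.lt_succ_self m))
      exact Nat.succ_le_of_lt (Nat.lt_of_le_of_lt (ih h') hlt)
  simpa using key i.val i.isLt


/-- Any `kk`-fold product of the values of `lam` is at most the product of the
`kk` largest values. -/
lemma prod_subset_le_sorted (lam : Fin n → ℝ) (hlam : ∀ j, 0 ≤ lam j)
    (ρ : Equiv.Perm (Fin n)) (hmono : Antitone (fun x => lam (ρ x)))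
    (S' : Finset (Fin n)) (kk : ℕ) (hS' : S'.card = kk) :
    ∏ j ∈ S', lam j ≤
      ∏ i ∈ Finset.range kk, (if h : i < n then lam (ρ ⟨i, h⟩) else 0) := by
  classical
  have hkn : kk ≤ n := by
    rw [← hS']
    simpa using Finset.card_le_univ S'
  set S'' : Finset (Fin n) := S'.image ρ.symm with hS''def
  have hcard : S''.card = kk := by
    rw [hS''def, Finset.card_image_of_injective _ ρ.symm.injective, hS']
  have h1 : ∏ j ∈ S', lam j = ∏ j ∈ S'', lam (ρ j) := by
    rw [hS''def, Finset.prod_image (fun x _ y _ h => ρ.symm.injective h)]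
    exact Finset.prod_congr rfl fun x _ => by rw [Equiv.apply_symm_apply]
  rw [h1, prod_S_eq S'' hcard (fun j => lam (ρ j))]
  have h2 : ∏ i ∈ Finset.range kk, (if h : i < n then lam (ρ ⟨i, h⟩) else 0)
      = ∏ a : Fin kk, lam (ρ (⟨a.val, a.isLt.trans_le hkn⟩ : Fin n)) := by
    rw [← Fin.prod_univ_eq_prod_range (fun i => if h : i < n then lam (ρ ⟨i, h⟩) else 0) kk]
    refine Finset.prod_congr rfl fun a _ => ?_
    rw [dif_pos (a.isLt.trans_le hkn)]
  rw [h2]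
  refine Finset.prod_le_prod (fun a _ => hlam _) (fun a _ => ?_)
  refine hmono ?_
  rw [Fin.le_def]
  exact strictMono_le_val (S''.orderEmbOfFin hcard).strictMono a

/-- a permutation sorting a tuple in decreasing order -/
lemma exists_antitone_perm {n : ℕ} (f : Fin n → ℝ) :
    ∃ ρ : Equiv.Perm (Fin n), Antitone (fun x => f (ρ x)) := by
  refine ⟨(Fin.revPerm).trans (Tuple.sort f), fun a b hab => ?_⟩
  simp only [Equiv.trans_apply, Fin.revPerm_apply]
  exact Tuple.monotone_sort f (by rwa [Fin.rev_le_rev])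

/-- Contractivity of the diagonal projection for `0 < p < 1`: for an upper
triangular `T ∈ M_n(ℂ)`, `τ(|Φ(T)|^p) ≤ τ(|T|^p)` where `Φ(T)` is the diagonal
part, `τ` is the normalized trace, and `τ(|T|^p)` is expressed via the
eigenvalues `λ_i` of `Tᴴ * T` as `(1/n) ∑ i, λ_i^{p/2}`. -/
theorem diagonal_part_contractive_p_lt_one (n : ℕ)
    (p : ℝ) (hp0 : 0 < p) (hp1 : p < 1)
    (T : Matrix (Fin n) (Fin n) ℂ)
    (hT : T.BlockTriangular (id : Fin n → Fin n)) :
    (n : ℝ)⁻¹ * ∑ i, (‖T i i‖) ^ p ≤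
      (n : ℝ)⁻¹ *
        ∑ i, ((posSemidef_conjTranspose_mul_self T).1.eigenvalues i) ^ (p / 2) := by
  classical
  have hinv : (0:ℝ) ≤ (n : ℝ)⁻¹ := by positivity
  refine mul_le_mul_of_nonneg_left ?_ hinv
  set q : ℝ := p / 2 with hq
  have hq0 : 0 < q := by positivity
  set lam : Fin n → ℝ := (posSemidef_conjTranspose_mul_self T).1.eigenvalues with hlam
  have hlam0 : ∀ j, 0 ≤ lam j := fun j =>
    (posSemidef_conjTranspose_mul_self T).eigenvalues_nonneg j
  set d : Fin n → ℝ := fun i => (‖T i i‖)^2 with hd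
  have hd0 : ∀ i, 0 ≤ d i := fun i => sq_nonneg _
  obtain ⟨ρd, hρd⟩ := exists_antitone_perm d
  obtain ⟨ρl, hρl⟩ := exists_antitone_perm lam
  set aN : ℕ → ℝ := fun i => if h : i < n then d (ρd ⟨i, h⟩) else 0 with haN
  set bN : ℕ → ℝ := fun i => if h : i < n then lam (ρl ⟨i, h⟩) else 0 with hbN
  have haN0 : ∀ i < n, 0 ≤ aN i := fun i hi => by
    simp only [haN]; rw [dif_pos hi]; exact hd0 _
  have hbN0 : ∀ i < n, 0 ≤ bN i := fun i hi => by
    simp only [hbN]; rw [dif_pos hi]; exact hlam0 _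
  have haNanti : ∀ i j, i ≤ j → j < n → aN j ≤ aN i := by
    intro i j hij hj
    have hi : i < n := lt_of_le_of_lt hij hj
    simp only [haN]
    rw [dif_pos hi, dif_pos hj]
    exact hρd (show (⟨i, hi⟩ : Fin n) ≤ ⟨j, hj⟩ from hij)
  -- prefix products
  have hab : ∀ kk ≤ n, ∏ i ∈ range kk, aN i ≤ ∏ i ∈ range kk, bN i := by
    intro kk hkk
    set Sk : Finset (Fin n) :=
      Finset.image (fun a : Fin kk => ρd (Fin.castLE hkk a)) Finset.univ with hSk
    have hinj : Function.Injective (fun a : Fin kk => ρd (Fin.castLE hkk a)) := by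
      intro x y hxy
      exact Fin.castLE_injective hkk (ρd.injective hxy)
    have hSkcard : Sk.card = kk := by
      rw [hSk, Finset.card_image_of_injective _ hinj, Finset.card_univ, Fintype.card_fin]
    have hL : ∏ i ∈ range kk, aN i = ∏ i ∈ Sk, d i := by
      rw [hSk, Finset.prod_image (fun x _ y _ h => hinj h)]
      rw [← Fin.prod_univ_eq_prod_range aN kk]
      refine Finset.prod_congr rfl fun a _ => ?_
      simp only [haN]
      rw [dif_pos (a.isLt.trans_le hkk)]
      rfl
    have hR : ∀ S' : Finset (Fin n), S'.card = Sk.card →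
        ∏ j ∈ S', lam j ≤ ∏ i ∈ range kk, bN i := by
      intro S' hS'
      rw [hSkcard] at hS'
      exact prod_subset_le_sorted lam hlam0 ρl hρl S' kk hS'
    rw [hL]
    exact key_matrix T hT Sk (∏ i ∈ range kk, bN i) hR
  have main := weyl_scalar aN bN n q hq0 haN0 hbN0 haNanti hab
  -- convert sums
  have hLHS : ∑ i ∈ range n, aN i ^ q = ∑ i, (‖T i i‖) ^ p := by
    rw [← Fin.sum_univ_eq_sum_range (fun i => aN i ^ q) n]
    rw [show (fun i : Fin n => aN i.val ^ q) = fun i : Fin n => d (ρd i) ^ q from ?_]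
    · rw [Equiv.sum_comp ρd (fun i => d i ^ q)]
      refine Finset.sum_congr rfl fun i _ => ?_
      simp only [hd]
      have habs : (0:ℝ) ≤ ‖T i i‖ := norm_nonneg _
      rw [show ((‖T i i‖)^2 : ℝ) = (‖T i i‖) ^ ((2:ℕ) : ℝ) from
        (Real.rpow_natCast _ 2).symm]
      rw [← Real.rpow_mul habs]
      push_cast
      rw [show (2:ℝ) * (p / 2) = p by ring]
    · funext i
      simp only [haN]
      rw [dif_pos i.isLt]
  have hRHS : ∑ i ∈ range n, bN i ^ q = ∑ i, lam i ^ (p / 2) := by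
    rw [← Fin.sum_univ_eq_sum_range (fun i => bN i ^ q) n]
    rw [show (fun i : Fin n => bN i.val ^ q) = fun i : Fin n => lam (ρl i) ^ q from ?_]
    · rw [Equiv.sum_comp ρl (fun i => lam i ^ q)]
    · funext i
      simp only [hbN]
      rw [dif_pos i.isLt]
  rw [← hLHS, ← hRHS]
  exact main
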